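/- For every natural number n ≥ 3, the set of natural numbers m ≥ 3 such that the subfield of ℂ generated over ℚ by i·cos(π/m) is isomorphic as a field to the subfield of ℂ generated over ℚ by i·cos(π/n) is finite. -/

import Mathlib

set_option maxHeartbeats 1000000
set_option synthInstance.maxHeartbeats 400000

/-- The invariant trace field `K n`: the subfield of `ℂ` generated over `ℚ`
by `i * cos (π / n)`. -/
noncomputable def pretzelTraceField (n : ℕ) : IntermediateField ℚ ℂ :=
  IntermediateField.adjoin ℚ {Complex.I * (Real.cos (Real.pi / n) : ℂ)}

open Complex IntermediateField Polynomial Module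


lemma totient_finite (C : ℕ) : {m : ℕ | 0 < m ∧ m.totient ≤ C}.Finite := by
  apply Set.Finite.subset
    (Set.finite_Iic (∏ p ∈ (Finset.range (C+2)).filter Nat.Prime, p ^ (C + 1)))
  rintro m ⟨hm, hC⟩
  simp only [Set.mem_Iic]
  have key : ∀ p ∈ m.primeFactors, p < C + 2 ∧ m.factorization p ≤ C + 1 := by
    intro p hp
    have hpp : p.Prime := Nat.prime_of_mem_primeFactors hp
    have hp2 : 2 ≤ p := hpp.two_le
    set k := m.factorization p with hk
    have hkpos : 0 < k := (Nat.Prime.factorization_pos_of_dvd hpp hm.ne'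
      (Nat.dvd_of_mem_primeFactors hp))
    have hdvd : p ^ k ∣ m := Nat.ordProj_dvd m p
    have h1 : (p ^ k).totient ≤ C := le_trans
      (Nat.le_of_dvd (Nat.totient_pos.2 hm) (Nat.totient_dvd_of_dvd hdvd)) hC
    rw [Nat.totient_prime_pow hpp hkpos] at h1
    constructor
    · have : p - 1 ≤ C := le_trans (Nat.le_mul_of_pos_left _ (pow_pos hpp.pos _)) h1
      omega
    · have h2 : p ^ (k - 1) ≤ C :=
        le_trans (Nat.le_mul_of_pos_right _ (by omega : 0 < p - 1)) h1
      have h3 : 2 ^ (k - 1) ≤ p ^ (k - 1) := Nat.pow_le_pow_left hp2 _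
      have h4 : k - 1 < 2 ^ (k - 1) := Nat.lt_two_pow_self
      omega
  have hdvd : m ∣ ∏ p ∈ (Finset.range (C+2)).filter Nat.Prime, p ^ (C + 1) := by
    conv_lhs => rw [← Nat.factorization_prod_pow_eq_self hm.ne']
    rw [Nat.prod_factorization_eq_prod_primeFactors]
    calc (∏ p ∈ m.primeFactors, p ^ m.factorization p)
        ∣ ∏ p ∈ m.primeFactors, p ^ (C + 1) :=
          Finset.prod_dvd_prod_of_dvd _ _ fun p hp => pow_dvd_pow p (key p hp).2
      _ ∣ ∏ p ∈ (Finset.range (C+2)).filter Nat.Prime, p ^ (C + 1) :=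
          Finset.prod_dvd_prod_of_subset _ _ _ fun p hp => Finset.mem_filter.2
            ⟨Finset.mem_range.2 (key p hp).1, Nat.prime_of_mem_primeFactors hp⟩
  refine Nat.le_of_dvd ?_ hdvd
  exact Finset.prod_pos fun p hp => pow_pos
    (Nat.Prime.pos (Finset.mem_filter.1 hp).2) _


lemma gen_integral (m : ℕ) (hm : m ≠ 0) :
    IsIntegral ℚ (Complex.I * (Real.cos (Real.pi / m) : ℂ)) := by
  have hm' : (m:ℂ) ≠ 0 := Nat.cast_ne_zero.2 hm
  have hw : IsIntegral ℚ (Complex.exp ((Real.pi / m : ℝ) * I)) := by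
    refine ⟨Polynomial.X ^ (2 * m) - 1, ?_, ?_⟩
    · exact Polynomial.monic_X_pow_sub_C 1 (by omega)
    · simp only [Polynomial.eval₂_sub, Polynomial.eval₂_pow, Polynomial.eval₂_X,
        Polynomial.eval₂_one, sub_eq_zero]
      rw [← Complex.exp_nat_mul]
      rw [show ((2 * m : ℕ) : ℂ) * (((Real.pi / m : ℝ) : ℂ) * I) = 2 * Real.pi * I by
        push_cast; field_simp]
      exact Complex.exp_two_pi_mul_I
  have hwinv : IsIntegral ℚ (Complex.exp ((Real.pi / m : ℝ) * I))⁻¹ := by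
    rw [← Complex.exp_neg]
    refine ⟨Polynomial.X ^ (2 * m) - 1, Polynomial.monic_X_pow_sub_C 1 (by omega), ?_⟩
    simp only [Polynomial.eval₂_sub, Polynomial.eval₂_pow, Polynomial.eval₂_X,
      Polynomial.eval₂_one, sub_eq_zero]
    rw [← Complex.exp_nat_mul]
    rw [show ((2 * m : ℕ) : ℂ) * -(((Real.pi / m : ℝ) : ℂ) * I) = -(2 * Real.pi * I) by
      push_cast; field_simp]
    rw [Complex.exp_neg, Complex.exp_two_pi_mul_I, inv_one]
  have hcos : ((Real.cos (Real.pi / m) : ℝ) : ℂ)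
      = (Complex.exp ((Real.pi / m : ℝ) * I) + (Complex.exp ((Real.pi / m : ℝ) * I))⁻¹) / 2 := by
    rw [← Complex.exp_neg, Complex.ofReal_cos, eq_div_iff (two_ne_zero' ℂ), mul_comm,
      Complex.two_cos, neg_mul]
  have h2 : IsIntegral ℚ ((2 : ℂ)⁻¹) := by
    have : ((2 : ℂ))⁻¹ = algebraMap ℚ ℂ (2⁻¹) := by push_cast; norm_num
    rw [this]; exact isIntegral_algebraMap
  have hI : IsIntegral ℚ (I : ℂ) := by
    refine ⟨Polynomial.X ^ 2 + 1, ?_, by simp⟩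
    apply Polynomial.monic_X_pow_add_C _ (by norm_num)
  have := (hI.mul ((hw.add hwinv).mul h2))
  rwa [show I * ((Complex.exp ((Real.pi / m : ℝ) * I) + (Complex.exp ((Real.pi / m : ℝ) * I))⁻¹) * (2:ℂ)⁻¹)
    = I * ((Real.cos (Real.pi / m) : ℝ) : ℂ) by rw [hcos]; ring] at this



lemma pretzel_fd (m : ℕ) (hm : m ≠ 0) : FiniteDimensional ℚ (pretzelTraceField m) :=
  IntermediateField.adjoin.finiteDimensional (gen_integral m hm)

lemma totient_le_pretzel (m : ℕ) (hm : m ≠ 0) :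
    m.totient ≤ 2 * finrank ℚ (pretzelTraceField m) := by
  have hm' : (m:ℂ) ≠ 0 := Nat.cast_ne_zero.2 hm
  set c : ℂ := Complex.I * (Real.cos (Real.pi / m) : ℂ) with hc
  set t : ℂ := ((Real.cos (2 * Real.pi / m) : ℝ) : ℂ) with ht
  -- t ∈ K_m
  have hcsq : c * c = -(((Real.cos (Real.pi / m)) : ℂ) ^ 2) := by
    rw [hc, mul_mul_mul_comm, Complex.I_mul_I]; ring
  have hid : t = -(c * c) - (c * c) - 1 := by
    rw [ht, show (2 * Real.pi / m) = 2 * (Real.pi / m) by ring, Real.cos_two_mul, hcsq]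
    push_cast
    ring
  have htK : t ∈ pretzelTraceField m := by
    have hcK : c ∈ pretzelTraceField m :=
      IntermediateField.subset_adjoin ℚ _ rfl
    rw [hid]
    exact sub_mem (sub_mem (neg_mem (mul_mem hcK hcK)) (mul_mem hcK hcK)) (pretzelTraceField m).one_mem
  -- t is integral
  have hcint : IsIntegral ℚ c := gen_integral m hm
  have htint : IsIntegral ℚ t := by
    rw [hid]
    exact (((hcint.mul hcint).neg.sub (hcint.mul hcint)).sub isIntegral_one)
  -- ζ
  set ζ : ℂ := Complex.exp (2 * Real.pi * Complex.I / m) with hζdef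
  have hζ : IsPrimitiveRoot ζ m := Complex.isPrimitiveRoot_exp m hm
  have hζne : ζ ≠ 0 := Complex.exp_ne_zero _
  have hζint : IsIntegral ℚ ζ := by
    refine ⟨Polynomial.X ^ m - 1, Polynomial.monic_X_pow_sub_C 1 (by omega), ?_⟩
    simp only [Polynomial.eval₂_sub, Polynomial.eval₂_pow, Polynomial.eval₂_X,
      Polynomial.eval₂_one, sub_eq_zero]
    exact hζ.pow_eq_one
  -- quadratic relation: ζ^2 - 2 t ζ + 1 = 0
  have htζ : 2 * t = ζ + ζ⁻¹ := by
    rw [ht, Complex.ofReal_cos, Complex.two_cos, hζdef, ← Complex.exp_neg]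
    congr 2
    · push_cast; field_simp
    · push_cast; field_simp
  have hquad : ζ ^ 2 - 2 * t * ζ + 1 = 0 := by
    have := congrArg (· * ζ) htζ
    simp only [add_mul, inv_mul_cancel₀ hζne] at this
    rw [sq]
    linear_combination -this
  -- F = ℚ(t)
  set F : IntermediateField ℚ ℂ := ℚ⟮t⟯ with hF
  haveI hFfd : FiniteDimensional ℚ F := IntermediateField.adjoin.finiteDimensional htint
  have hFle : F ≤ pretzelTraceField m := by
    rw [hF, IntermediateField.adjoin_simple_le_iff]
    exact htK
  haveI : FiniteDimensional ℚ (pretzelTraceField m) := pretzel_fd m hm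
  haveI : Module.Finite ℚ
      ↥(Subalgebra.toSubmodule (pretzelTraceField m).toSubalgebra) :=
    pretzel_fd m hm
  have h1 : finrank ℚ F ≤ finrank ℚ (pretzelTraceField m) :=
    Submodule.finrank_mono
      (show F.toSubmodule ≤ (pretzelTraceField m).toSubmodule from fun x hx => hFle hx)
  -- E = F(ζ)
  have hζintF : IsIntegral F ζ := hζint.tower_top
  set E : IntermediateField F ℂ := F⟮ζ⟯ with hE
  haveI hEfd : FiniteDimensional F E := IntermediateField.adjoin.finiteDimensional hζintF
  have h2 : finrank F E ≤ 2 := by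
    rw [hE, IntermediateField.adjoin.finrank hζintF]
    have htF : t ∈ F := IntermediateField.mem_adjoin_simple_self ℚ t
    set p : Polynomial F := C 1 * X ^ 2 + C (-(2 * ⟨t, htF⟩ : F)) * X + C 1 with hp
    have hpne : p ≠ 0 := by
      intro h
      have := Polynomial.natDegree_quadratic (a := (1:F)) (b := (-(2 * ⟨t, htF⟩ : F))) (c := (1:F)) one_ne_zero
      rw [← hp, h] at this
      simp at this
    have hpeval : Polynomial.aeval ζ p = 0 := by
      rw [hp]
      simp only [map_add, map_mul, map_pow, Polynomial.aeval_X, Polynomial.aeval_C, map_one,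
        map_neg, one_mul, map_ofNat]
      have h2t : (algebraMap F ℂ) (⟨t, htF⟩ : F) = t := rfl
      rw [h2t]
      linear_combination hquad
    have := minpoly.degree_le_of_ne_zero F ζ hpne hpeval
    have hdeg : p.natDegree = 2 := by
      rw [hp]; exact Polynomial.natDegree_quadratic one_ne_zero
    have := Polynomial.natDegree_le_natDegree this
    omega
  -- tower
  have h3 : m.totient ≤ finrank ℚ F * finrank F E := by
    rw [Module.finrank_mul_finrank ℚ F E]
    haveI : FiniteDimensional ℚ E := FiniteDimensional.trans ℚ F E
    have hrs : finrank ℚ (E.restrictScalars ℚ) = finrank ℚ E := rfl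
    have hQζ : finrank ℚ ℚ⟮ζ⟯ = m.totient := by
      rw [IntermediateField.adjoin.finrank hζint,
        ← Polynomial.cyclotomic_eq_minpoly_rat hζ (Nat.pos_of_ne_zero hm),
        Polynomial.natDegree_cyclotomic]
    have hle : ℚ⟮ζ⟯ ≤ E.restrictScalars ℚ := by
      rw [IntermediateField.adjoin_simple_le_iff, IntermediateField.mem_restrictScalars]
      exact IntermediateField.mem_adjoin_simple_self F ζ
    haveI hfinE : FiniteDimensional ℚ (E.restrictScalars ℚ) := FiniteDimensional.trans ℚ F E
    haveI : Module.Finite ℚ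
        ↥(Subalgebra.toSubmodule (E.restrictScalars ℚ).toSubalgebra) := hfinE
    rw [← hQζ, ← hrs]
    exact Submodule.finrank_mono
      (show (ℚ⟮ζ⟯).toSubmodule ≤ (E.restrictScalars ℚ).toSubmodule from fun x hx => hle hx)
  calc m.totient ≤ finrank ℚ F * finrank F E := h3
    _ ≤ finrank ℚ F * 2 := Nat.mul_le_mul_left _ h2
    _ = 2 * finrank ℚ F := by ring
    _ ≤ 2 * finrank ℚ (pretzelTraceField m) := Nat.mul_le_mul_left _ h1

-- ring equiv between ℚ-algebras (division rings) is ℚ-linear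
noncomputable def ratLinearEquiv {K L : Type*} [DivisionRing K] [DivisionRing L]
    [CharZero K] [CharZero L] [Algebra ℚ K] [Algebra ℚ L] (e : K ≃+* L) : K ≃ₗ[ℚ] L :=
  { e with
    map_smul' := by
      intro q x
      simp only [RingEquiv.toEquiv_eq_coe, Equiv.toFun_as_coe, EquivLike.coe_coe,
        RingHom.id_apply]
      rw [Algebra.smul_def, Algebra.smul_def, map_mul, eq_ratCast, eq_ratCast, map_ratCast] }


theorem finitely_many_isomorphic_pretzelTraceFields (n : ℕ) (hn : 3 ≤ n) :
    {m : ℕ | 3 ≤ m ∧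
      Nonempty (pretzelTraceField m ≃+* pretzelTraceField n)}.Finite := by
  apply Set.Finite.subset (totient_finite (2 * finrank ℚ (pretzelTraceField n)))
  rintro m ⟨hm3, ⟨e⟩⟩
  have hm : m ≠ 0 := by omega
  refine ⟨by omega, ?_⟩
  have h1 := totient_le_pretzel m hm
  have h2 : finrank ℚ (pretzelTraceField m) = finrank ℚ (pretzelTraceField n) :=
    (ratLinearEquiv e).finrank_eq
  omega
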